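/- For every m with 3 ≤ m ≤ n and any distinct elements a_1, …, a_m of {1,…,n}, the following cyclic relation holds in the Fomin–Kirillov algebra E_n: the sum over i = 2, …, m of the product x_{a_1 a_i} x_{a_1 a_{i+1}} ⋯ x_{a_1 a_m} · x_{a_1 a_2} x_{a_1 a_3} ⋯ x_{a_1 a_i} equals 0. -/

import Mathlib

open scoped TensorProduct

namespace FK

/-- Defining relations of the Fomin–Kirillov algebra `E n`, with generators indexed by
ordered pairs `(i, j)`; we also impose `x_{ii} = 0` and the antisymmetry `x_{ji} = -x_{ij}`,
so that the generators of the algebra are the `x_{ij}` for `i < j`. -/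
inductive Rel (n : ℕ) : FreeAlgebra ℚ (Fin n × Fin n) → FreeAlgebra ℚ (Fin n × Fin n) → Prop
  | diag (i : Fin n) : Rel n (FreeAlgebra.ι ℚ (i, i)) 0
  | antisymm (i j : Fin n) (hij : i ≠ j) :
      Rel n (FreeAlgebra.ι ℚ (j, i)) (-FreeAlgebra.ι ℚ (i, j))
  | square (i j : Fin n) (hij : i ≠ j) :
      Rel n (FreeAlgebra.ι ℚ (i, j) * FreeAlgebra.ι ℚ (i, j)) 0
  | comm (i j k l : Fin n) (h : List.Nodup [i, j, k, l]) :
      Rel n (FreeAlgebra.ι ℚ (i, j) * FreeAlgebra.ι ℚ (k, l))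
        (FreeAlgebra.ι ℚ (k, l) * FreeAlgebra.ι ℚ (i, j))
  | cyclic (i j k : Fin n) (h : List.Nodup [i, j, k]) :
      Rel n (FreeAlgebra.ι ℚ (i, j) * FreeAlgebra.ι ℚ (j, k)
        + FreeAlgebra.ι ℚ (j, k) * FreeAlgebra.ι ℚ (k, i)
        + FreeAlgebra.ι ℚ (k, i) * FreeAlgebra.ι ℚ (i, j)) 0

/-- The Fomin–Kirillov algebra `E n`. -/
abbrev E (n : ℕ) : Type := RingQuot (Rel n)

/-- The generator `x_{ij}` of `E n`. -/
noncomputable def x (n : ℕ) (i j : Fin n) : E n :=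
  RingQuot.mkAlgHom ℚ (Rel n) (FreeAlgebra.ι ℚ (i, j))

/-- The product of generators `x_{i₁j₁} ⋯ x_{i_d j_d}` given by a list of pairs. -/
noncomputable def word (n : ℕ) (l : List (Fin n × Fin n)) : E n :=
  (l.map fun p => x n p.1 p.2).prod

/-- The degree-`d` component of `E n`: the span of products of `d` generators. -/
def degSpan (n : ℕ) (d : ℕ) : Submodule ℚ (E n) :=
  Submodule.span ℚ {y | ∃ l : List (Fin n × Fin n),
    (∀ p ∈ l, p.1 ≠ p.2) ∧ l.length = d ∧ y = word n l}

/-- The Fomin–Kirillov algebra of a graph `G`: the subalgebra of `E n` generated by the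
`x_{ij}` with `{i,j}` an edge of `G`. -/
def EG (n : ℕ) (G : SimpleGraph (Fin n)) : Subalgebra ℚ (E n) :=
  Algebra.adjoin ℚ {y | ∃ i j : Fin n, G.Adj i j ∧ y = x n i j}

/-- The degree-`d` component `E_G^d = E_G ∩ E_n^d`. -/
def EGdeg (n : ℕ) (G : SimpleGraph (Fin n)) (d : ℕ) : Submodule ℚ (E n) :=
  (EG n G).toSubmodule ⊓ degSpan n d

/-- The positive-degree part `E_G⁺` of `E_G`. -/
def EGplus (n : ℕ) (G : SimpleGraph (Fin n)) : Submodule ℚ (E n) :=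
  ⨆ d : ℕ, ⨆ _ : 1 ≤ d, EGdeg n G d


variable {n : ℕ}

lemma x_sq (i j : Fin n) (h : i ≠ j) : x n i j * x n i j = 0 := by
  rw [x, ← map_mul, RingQuot.mkAlgHom_rel ℚ (Rel.square i j h), map_zero]

lemma x_antisymm (i j : Fin n) (h : i ≠ j) : x n j i = - x n i j := by
  rw [x, x, RingQuot.mkAlgHom_rel ℚ (Rel.antisymm i j h), map_neg]

lemma x_comm (i j k l : Fin n) (h : List.Nodup [i, j, k, l]) :
    x n i j * x n k l = x n k l * x n i j := by
  rw [x, x, ← map_mul, ← map_mul, RingQuot.mkAlgHom_rel ℚ (Rel.comm i j k l h)]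

lemma x_cyclic (i j k : Fin n) (h : List.Nodup [i, j, k]) :
    x n i j * x n j k + x n j k * x n k i + x n k i * x n i j = 0 := by
  rw [x, x, x, ← map_mul, ← map_mul, ← map_mul, ← map_add, ← map_add,
    RingQuot.mkAlgHom_rel ℚ (Rel.cyclic i j k h), map_zero]

lemma nodup3 {a b c : Fin n} (h1 : a ≠ b) (h2 : a ≠ c) (h3 : b ≠ c) :
    List.Nodup [a, b, c] := by
  simp [h1, h2, h3]

lemma nodup4 {a b c d : Fin n} (h1 : a ≠ b) (h2 : a ≠ c) (h3 : a ≠ d) (h4 : b ≠ c)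
    (h5 : b ≠ d) (h6 : c ≠ d) : List.Nodup [a, b, c, d] := by
  simp [h1, h2, h3, h4, h5, h6]

/-- Crossing relation: `Z·Yu = Yv·Z - Yu·Yv` where `Z = x_{vu}`, `Yw = x_{ow}`. -/
lemma cross (o u v : Fin n) (hou : o ≠ u) (hov : o ≠ v) (huv : u ≠ v) :
    x n v u * x n o u = x n o v * x n v u - x n o u * x n o v := by
  have h := x_cyclic v u o (nodup3 huv.symm hov.symm hou.symm)
  rw [show x n u o = - x n o u from x_antisymm o u hou] at h
  rw [mul_neg (x n v u) (x n o u), neg_mul (x n o u) (x n o v)] at h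
  rw [← sub_eq_zero,
    show x n v u * x n o u - (x n o v * x n v u - x n o u * x n o v)
      = -(-(x n v u * x n o u) + -(x n o u * x n o v) + x n o v * x n v u) from by abel,
    h, neg_zero]

/-- The word `x_{o l₁} ⋯ x_{o l_k}`. -/
noncomputable def wrd (o : Fin n) (l : List (Fin n)) : E n := (l.map (x n o)).prod

lemma wrd_nil (o : Fin n) : wrd o ([] : List (Fin n)) = 1 := rfl

lemma wrd_cons (o k : Fin n) (l : List (Fin n)) : wrd o (k :: l) = x n o k * wrd o l := by
  simp [wrd]

lemma wrd_append (o : Fin n) (l₁ l₂ : List (Fin n)) :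
    wrd o (l₁ ++ l₂) = wrd o l₁ * wrd o l₂ := by
  simp [wrd]

lemma wrd_singleton (o k : Fin n) : wrd o [k] = x n o k := by
  simp [wrd]

lemma comm_wrd (o u v : Fin n) (hou : o ≠ u) (hov : o ≠ v) (huv : u ≠ v)
    (l : List (Fin n)) (hl : ∀ k ∈ l, k ≠ o ∧ k ≠ u ∧ k ≠ v) :
    x n v u * wrd o l = wrd o l * x n v u := by
  induction l with
  | nil => simp [wrd_nil]
  | cons k l ih =>
      obtain ⟨hko, hku, hkv⟩ := hl k List.mem_cons_self
      rw [wrd_cons, ← mul_assoc,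
        x_comm v u o k (nodup4 huv.symm hov.symm hkv.symm hou.symm hku.symm hko.symm),
        mul_assoc, ih (fun k hk => hl k (List.mem_cons_of_mem _ hk)), mul_assoc]

/-- `P(c₁,…,c_K) = Y_{c₁} ⋯ Y_{c_K} Y_{c₁}`. -/
noncomputable def Pf (o : Fin n) (l : List (Fin n)) : E n := wrd o (l ++ l.take 1)

lemma caseA (o u v : Fin n) (hou : o ≠ u) (hov : o ≠ v) (huv : u ≠ v)
    (t : List (Fin n)) (ht : ∀ k ∈ t, k ≠ o ∧ k ≠ u ∧ k ≠ v) :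
    x n v u * Pf o (u :: t) =
      Pf o (v :: t) * x n v u - Pf o (u :: v :: t) - Pf o (v :: (t ++ [u])) := by
  have h1 := cross o u v hou hov huv
  have h2 := comm_wrd o u v hou hov huv t ht
  have e1 : Pf o (u :: t) = x n o u * (wrd o t * x n o u) := by
    simp [Pf, wrd_cons, wrd_append, wrd_singleton, wrd_nil, mul_assoc]
  have e2 : Pf o (v :: t) = x n o v * (wrd o t * x n o v) := by
    simp [Pf, wrd_cons, wrd_append, wrd_singleton, wrd_nil, mul_assoc]
  have e3 : Pf o (u :: v :: t) = x n o u * (x n o v * (wrd o t * x n o u)) := by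
    simp [Pf, wrd_cons, wrd_append, wrd_singleton, wrd_nil, mul_assoc]
  have e4 : Pf o (v :: (t ++ [u])) = x n o v * (wrd o t * (x n o u * x n o v)) := by
    simp [Pf, wrd_cons, wrd_append, wrd_singleton, wrd_nil, mul_assoc]
  rw [e1, e2, e3, e4]
  calc x n v u * (x n o u * (wrd o t * x n o u))
      = (x n v u * x n o u) * (wrd o t * x n o u) := by (try simp only [mul_assoc, sub_mul, mul_sub]); (try abel)
    _ = (x n o v * x n v u - x n o u * x n o v) * (wrd o t * x n o u) := by rw [h1]
    _ = x n o v * ((x n v u * wrd o t) * x n o u)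
        - x n o u * (x n o v * (wrd o t * x n o u)) := by (try simp only [mul_assoc, sub_mul, mul_sub]); (try abel)
    _ = x n o v * ((wrd o t * x n v u) * x n o u)
        - x n o u * (x n o v * (wrd o t * x n o u)) := by rw [h2]
    _ = x n o v * (wrd o t * (x n v u * x n o u))
        - x n o u * (x n o v * (wrd o t * x n o u)) := by (try simp only [mul_assoc, sub_mul, mul_sub]); (try abel)
    _ = x n o v * (wrd o t * (x n o v * x n v u - x n o u * x n o v))
        - x n o u * (x n o v * (wrd o t * x n o u)) := by rw [h1]
    _ = _ := by (try simp only [mul_assoc, sub_mul, mul_sub]); (try abel)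

lemma caseB (o u v p₁ : Fin n) (hou : o ≠ u) (hov : o ≠ v) (huv : u ≠ v)
    (p' q : List (Fin n))
    (hp₁ : p₁ ≠ o ∧ p₁ ≠ u ∧ p₁ ≠ v)
    (hp' : ∀ k ∈ p', k ≠ o ∧ k ≠ u ∧ k ≠ v)
    (hq : ∀ k ∈ q, k ≠ o ∧ k ≠ u ∧ k ≠ v) :
    x n v u * Pf o ((p₁ :: p') ++ u :: q) =
      Pf o ((p₁ :: p') ++ v :: q) * x n v u - Pf o ((p₁ :: p') ++ u :: v :: q) := by
  have h1 := cross o u v hou hov huv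
  obtain ⟨h1o, h1u, h1v⟩ := hp₁
  have hQ : ∀ k ∈ q ++ [p₁], k ≠ o ∧ k ≠ u ∧ k ≠ v := by
    intro k hk
    rcases List.mem_append.mp hk with h | h
    · exact hq k h
    · simp only [List.mem_singleton] at h; subst h; exact ⟨h1o, h1u, h1v⟩
  have h2 := comm_wrd o u v hou hov huv p' hp'
  have h3 := comm_wrd o u v hou hov huv (q ++ [p₁]) hQ
  have e1 : Pf o ((p₁ :: p') ++ u :: q)
      = x n o p₁ * (wrd o p' * (x n o u * wrd o (q ++ [p₁]))) := by
    simp [Pf, wrd_cons, wrd_append, wrd_singleton, wrd_nil, mul_assoc]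
  have e2 : Pf o ((p₁ :: p') ++ v :: q)
      = x n o p₁ * (wrd o p' * (x n o v * wrd o (q ++ [p₁]))) := by
    simp [Pf, wrd_cons, wrd_append, wrd_singleton, wrd_nil, mul_assoc]
  have e3 : Pf o ((p₁ :: p') ++ u :: v :: q)
      = x n o p₁ * (wrd o p' * (x n o u * (x n o v * wrd o (q ++ [p₁])))) := by
    simp [Pf, wrd_cons, wrd_append, wrd_singleton, wrd_nil, mul_assoc]
  have c1 : x n v u * x n o p₁ = x n o p₁ * x n v u :=
    x_comm v u o p₁ (nodup4 huv.symm hov.symm h1v.symm hou.symm h1u.symm h1o.symm)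
  rw [e1, e2, e3]
  calc x n v u * (x n o p₁ * (wrd o p' * (x n o u * wrd o (q ++ [p₁]))))
      = (x n v u * x n o p₁) * (wrd o p' * (x n o u * wrd o (q ++ [p₁]))) := by (try simp only [mul_assoc, sub_mul, mul_sub]); (try abel)
    _ = x n o p₁ * ((x n v u * wrd o p') * (x n o u * wrd o (q ++ [p₁]))) := by
        rw [c1]; noncomm_ring
    _ = x n o p₁ * (wrd o p' * ((x n v u * x n o u) * wrd o (q ++ [p₁]))) := by
        rw [h2]; noncomm_ring
    _ = x n o p₁ * (wrd o p' * ((x n o v * x n v u - x n o u * x n o v) * wrd o (q ++ [p₁]))) := by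
        rw [h1]
    _ = x n o p₁ * (wrd o p' * (x n o v * (x n v u * wrd o (q ++ [p₁]))))
        - x n o p₁ * (wrd o p' * (x n o u * (x n o v * wrd o (q ++ [p₁])))) := by (try simp only [mul_assoc, sub_mul, mul_sub]); (try abel)
    _ = x n o p₁ * (wrd o p' * (x n o v * (wrd o (q ++ [p₁]) * x n v u)))
        - x n o p₁ * (wrd o p' * (x n o u * (x n o v * wrd o (q ++ [p₁])))) := by rw [h3]
    _ = _ := by (try simp only [mul_assoc, sub_mul, mul_sub]); (try abel)


lemma wrd_map (o : Fin n) (g : ℕ → Fin n) (S : List ℕ) :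
    wrd o (S.map g) = (S.map (fun k => x n o (g k))).prod := by
  induction S with
  | nil => rfl
  | cons s S ih => simp [wrd_cons, ih]

/-- Main lemma: the sum of `Pf` over all rotations of a list of distinct letters
(all distinct from the base `o`) vanishes. -/
lemma main_rot (o : Fin n) : ∀ (N : ℕ) (c : List (Fin n)), c.length ≤ N → (o :: c).Nodup →
    ∑ j ∈ Finset.range c.length, Pf o (c.rotate j) = 0 := by
  intro N
  induction N with
  | zero =>
      intro c hlen _
      have hc : c = [] := List.length_eq_zero_iff.mp (Nat.le_zero.mp hlen)
      subst hc
      simp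
  | succ N ihN =>
      intro c hlen hnd
      obtain _ | ⟨u, _ | ⟨v, t⟩⟩ := c
      · simp
      · have hou : o ≠ u := by simpa using (List.nodup_cons.mp hnd).1
        simp [Pf, wrd_cons, wrd_nil, x_sq o u hou]
      · simp only [List.nodup_cons, List.mem_cons, not_or] at hnd
        obtain ⟨⟨hou, hov, hot⟩, ⟨huv, hut⟩, hvt, hndt⟩ := hnd
        have ht : ∀ k ∈ t, k ≠ o ∧ k ≠ u ∧ k ≠ v := fun k hk =>
          ⟨fun h => hot (h ▸ hk), fun h => hut (h ▸ hk), fun h => hvt (h ▸ hk)⟩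
        have hnde : (o :: u :: t).Nodup := by
          simp only [List.nodup_cons, List.mem_cons, not_or]
          exact ⟨⟨hou, hot⟩, hut, hndt⟩
        have hndd : (o :: v :: t).Nodup := by
          simp only [List.nodup_cons, List.mem_cons, not_or]
          exact ⟨⟨hov, hot⟩, hvt, hndt⟩
        have hlen' : t.length + 1 ≤ N := by
          simp only [List.length_cons] at hlen; omega
        have hIHe : ∑ j ∈ Finset.range (t.length + 1), Pf o ((u :: t).rotate j) = 0 := by
          have h := ihN (u :: t) (by simpa using hlen') hnde
          simpa using h
        have hIHd : ∑ j ∈ Finset.range (t.length + 1), Pf o ((v :: t).rotate j) = 0 := by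
          have h := ihN (v :: t) (by simpa using hlen') hndd
          simpa using h
        have key : ∀ j ∈ Finset.range t.length,
            x n v u * Pf o ((u :: t).rotate (j + 1)) =
              Pf o ((v :: t).rotate (j + 1)) * x n v u
                - Pf o ((u :: v :: t).rotate (j + 1 + 1)) := by
          intro j hj
          rw [Finset.mem_range] at hj
          have hj1 : j + 1 ≤ (u :: t).length := by
            simp only [List.length_cons]; omega
          have hj2 : j + 1 ≤ (v :: t).length := by
            simp only [List.length_cons]; omega
          have hj3 : j + 1 + 1 ≤ (u :: v :: t).length := by
            simp only [List.length_cons]; omega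
          rw [List.rotate_eq_drop_append_take hj1, List.rotate_eq_drop_append_take hj2,
            List.rotate_eq_drop_append_take hj3]
          simp only [List.drop_succ_cons, List.take_succ_cons]
          obtain ⟨p₁, p', hp⟩ := List.exists_cons_of_ne_nil
            (show t.drop j ≠ [] by rw [ne_eq, List.drop_eq_nil_iff]; omega)
          have hsub : ∀ k ∈ p₁ :: p', k ∈ t := by
            intro k hk
            exact List.drop_subset j t (by rw [hp]; exact hk)
          rw [hp]
          exact caseB o u v p₁ hou hov huv p' (t.take j)
            (ht p₁ (hsub p₁ List.mem_cons_self))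
            (fun k hk => ht k (hsub k (List.mem_cons_of_mem p₁ hk)))
            (fun k hk => ht k (List.take_subset j t hk))
        have key0 : x n v u * Pf o ((u :: t).rotate 0) =
            Pf o ((v :: t).rotate 0) * x n v u - Pf o ((u :: v :: t).rotate 0)
              - Pf o ((u :: v :: t).rotate (0 + 1)) := by
          have h1 : (u :: v :: t).rotate (0 + 1) = v :: (t ++ [u]) := by
            rw [List.rotate_eq_drop_append_take
              (by simp only [List.length_cons]; omega : 0 + 1 ≤ (u :: v :: t).length)]
            simp
          rw [List.rotate_zero, List.rotate_zero, List.rotate_zero, h1]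
          exact caseA o u v hou hov huv t ht
        have e5 : ∑ j ∈ Finset.range (t.length + 1 + 1), Pf o ((u :: v :: t).rotate j)
            = ((∑ j ∈ Finset.range t.length, Pf o ((u :: v :: t).rotate (j + 1 + 1)))
                + Pf o ((u :: v :: t).rotate (0 + 1)))
              + Pf o ((u :: v :: t).rotate 0) := by
          rw [Finset.sum_range_succ' (fun j => Pf o ((u :: v :: t).rotate j)) (t.length + 1),
            Finset.sum_range_succ' (fun j => Pf o ((u :: v :: t).rotate (j + 1))) t.length]
        have e6 : ∑ j ∈ Finset.range (t.length + 1), Pf o ((v :: t).rotate j) * x n v u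
            = (∑ j ∈ Finset.range t.length, Pf o ((v :: t).rotate (j + 1)) * x n v u)
              + Pf o ((v :: t).rotate 0) * x n v u :=
          Finset.sum_range_succ' (fun j => Pf o ((v :: t).rotate j) * x n v u) t.length
        have e7 : ∑ j ∈ Finset.range (t.length + 1), x n v u * Pf o ((u :: t).rotate j)
            = (∑ j ∈ Finset.range t.length, x n v u * Pf o ((u :: t).rotate (j + 1)))
              + x n v u * Pf o ((u :: t).rotate 0) :=
          Finset.sum_range_succ' (fun j => x n v u * Pf o ((u :: t).rotate j)) t.length
        have h0 : (0 : E n) =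
            x n v u * ∑ j ∈ Finset.range (t.length + 1), Pf o ((u :: t).rotate j) := by
          rw [hIHe, mul_zero]
        rw [Finset.mul_sum, e7, Finset.sum_congr rfl key, key0, Finset.sum_sub_distrib] at h0
        have hG : (∑ j ∈ Finset.range t.length, Pf o ((v :: t).rotate (j + 1)) * x n v u)
            + Pf o ((v :: t).rotate 0) * x n v u = 0 := by
          rw [← e6, ← Finset.sum_mul, hIHd, zero_mul]
        have big : ∑ j ∈ Finset.range (t.length + 1 + 1), Pf o ((u :: v :: t).rotate j) = 0 := by
          calc ∑ j ∈ Finset.range (t.length + 1 + 1), Pf o ((u :: v :: t).rotate j)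
              = ((∑ j ∈ Finset.range t.length, Pf o ((u :: v :: t).rotate (j + 1 + 1)))
                  + Pf o ((u :: v :: t).rotate (0 + 1)))
                + Pf o ((u :: v :: t).rotate 0) := e5
            _ = ((∑ j ∈ Finset.range t.length, Pf o ((v :: t).rotate (j + 1)) * x n v u)
                  + Pf o ((v :: t).rotate 0) * x n v u)
                - ((∑ j ∈ Finset.range t.length, Pf o ((v :: t).rotate (j + 1)) * x n v u
                      - ∑ j ∈ Finset.range t.length, Pf o ((u :: v :: t).rotate (j + 1 + 1)))
                    + (Pf o ((v :: t).rotate 0) * x n v u - Pf o ((u :: v :: t).rotate 0)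
                        - Pf o ((u :: v :: t).rotate (0 + 1)))) := by abel
            _ = ((∑ j ∈ Finset.range t.length, Pf o ((v :: t).rotate (j + 1)) * x n v u)
                  + Pf o ((v :: t).rotate 0) * x n v u) - 0 := by rw [← h0]
            _ = 0 - 0 := by rw [hG]
            _ = 0 := by abel
        have hlenc : (u :: v :: t).length = t.length + 1 + 1 := by
          simp only [List.length_cons]
        rw [hlenc]
        exact big

/-- cyclic relations, [FK, Lemma 7.2]: for `3 ≤ m ≤ n` and distinct
`a₁, …, a_m` (here `a 0, …, a (m-1)`), the sum over `i = 2, …, m` (here `i = 1, …, m-1`) of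
`x_{a₁a_i} x_{a₁a_{i+1}} ⋯ x_{a₁a_m} · x_{a₁a_2} x_{a₁a_3} ⋯ x_{a₁a_i}` vanishes in `E n`. -/
theorem stmt3 (n m : ℕ) (hn : 3 ≤ n) (hm : 3 ≤ m) (hmn : m ≤ n)
    (a : ℕ → Fin n) (ha : Set.InjOn a (Set.Iio m)) :
    ∑ i ∈ Finset.Icc 1 (m - 1),
      (((List.range' i (m - i)).map fun k => x n (a 0) (a k)).prod *
        ((List.range' 1 i).map fun k => x n (a 0) (a k)).prod) = 0 := by
  classical
  have hnodup : (a 0 :: (List.range' 1 (m - 1)).map a).Nodup := by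
    have h1 : (0 :: List.range' 1 (m - 1)).Nodup := by
      have h2 : (0 :: List.range' 1 (m - 1)) = List.range' 0 (m - 1 + 1) := by
        rw [List.range'_succ]
      rw [h2]
      exact List.nodup_range' (s := 0)
    have h2 : ∀ k ∈ (0 :: List.range' 1 (m - 1)), k < m := by
      intro k hk
      rcases List.mem_cons.mp hk with h | h
      · omega
      · rw [List.mem_range'] at h; obtain ⟨i, hi, rfl⟩ := h; omega
    have h3 : (a 0 :: (List.range' 1 (m - 1)).map a) = (0 :: List.range' 1 (m - 1)).map a := by
      simp
    rw [h3]
    refine List.Nodup.map_on ?_ h1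
    intro p hp q hq hpq
    exact ha (Set.mem_Iio.mpr (h2 p hp)) (Set.mem_Iio.mpr (h2 q hq)) hpq
  have hmain := main_rot (a 0) (m - 1) ((List.range' 1 (m - 1)).map a)
    (by simp) hnodup
  rw [show ((List.range' 1 (m - 1)).map a).length = m - 1 by simp] at hmain
  have hIcc : Finset.Icc 1 (m - 1) = Finset.Ico 1 m := by
    rw [← Finset.Ico_add_one_right_eq_Icc]
    congr 1
    omega
  rw [hIcc, Finset.sum_Ico_eq_sum_range]
  rw [show m - 1 = (m - 1 : ℕ) from rfl] at hmain
  have hterm : ∀ j ∈ Finset.range (m - 1),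
      ((List.range' (1 + j) (m - (1 + j))).map fun k => x n (a 0) (a k)).prod *
        ((List.range' 1 (1 + j)).map fun k => x n (a 0) (a k)).prod
      = Pf (a 0) (((List.range' 1 (m - 1)).map a).rotate j) := by
    intro j hj
    rw [Finset.mem_range] at hj
    -- rotation of the index list
    have hsplit : List.range' 1 (m - 1) = List.range' 1 j ++ List.range' (1 + j) (m - 1 - j) := by
      have h := List.range'_append (s := 1) (m := j) (n := m - 1 - j) (step := 1)
      simp only [one_mul] at h
      have h2 : List.range' 1 j ++ List.range' (1 + j) (m - 1 - j) = List.range' 1 (m - 1) := by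
        rw [h]
        congr 1
        omega
      exact h2.symm
    have hrot : ((List.range' 1 (m - 1)).map a).rotate j
        = (List.range' (1 + j) (m - 1 - j)).map a ++ (List.range' 1 j).map a := by
      rw [List.rotate_eq_drop_append_take (by simp; omega)]
      rw [hsplit, List.map_append,
        List.drop_left' (by simp), List.take_left' (by simp)]
    -- the leading element of the rotated list
    obtain ⟨K, hK⟩ : ∃ K, m - 1 - j = K + 1 := ⟨m - 1 - j - 1, by omega⟩
    have hcons : List.range' (1 + j) (m - 1 - j) = (1 + j) :: List.range' (1 + j + 1) K := by
      rw [hK, List.range'_succ]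
    have htake : (((List.range' 1 (m - 1)).map a).rotate j).take 1 = [a (1 + j)] := by
      rw [hrot, hcons]
      simp
    rw [Pf, htake, hrot]
    rw [show ((List.range' (1 + j) (m - 1 - j)).map a ++ (List.range' 1 j).map a) ++ [a (1 + j)]
        = (List.range' (1 + j) (m - 1 - j)).map a ++ ((List.range' 1 j).map a ++ [a (1 + j)]) from
      by rw [List.append_assoc]]
    have hconcat : (List.range' 1 j).map a ++ [a (1 + j)] = (List.range' 1 (1 + j)).map a := by
      rw [show (1 + j) = j + 1 from Nat.add_comm 1 j, List.range'_concat, List.map_append]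
      simp [show (1 + 1 * j) = 1 + j by omega]
      rw [Nat.add_comm j 1]
    rw [hconcat, wrd_append]
    congr 1
    · rw [show m - (1 + j) = m - 1 - j by omega]
      exact (wrd_map (a 0) a (List.range' (1 + j) (m - 1 - j))).symm
    · exact (wrd_map (a 0) a (List.range' 1 (1 + j))).symm
  calc ∑ j ∈ Finset.range (m - 1),
        (((List.range' (1 + j) (m - (1 + j))).map fun k => x n (a 0) (a k)).prod *
          ((List.range' 1 (1 + j)).map fun k => x n (a 0) (a k)).prod)
      = ∑ j ∈ Finset.range (m - 1), Pf (a 0) (((List.range' 1 (m - 1)).map a).rotate j) :=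
        Finset.sum_congr rfl hterm
    _ = 0 := hmain

end FK
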